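/- The objective A ↦ Σ_{i=1}^n ‖X_i − A‖_F on ℝ^{k×r} is convex, and it is strictly convex (hence has a unique minimizer) provided the points vec(X₁),…,vec(X_n) do not all lie on a single line in ℝ^{kr}. -/

import Mathlib

open Matrix

/-- The Frobenius norm of a real matrix. -/
noncomputable def frob {k r : ℕ} (A : Matrix (Fin k) (Fin r) ℝ) : ℝ :=
  Real.sqrt ((Aᵀ * A).trace)

/-- Flatten a matrix into Euclidean space. -/
def matE {k r : ℕ} (A : Matrix (Fin k) (Fin r) ℝ) : EuclideanSpace ℝ (Fin k × Fin r) :=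
  WithLp.toLp 2 (fun p : Fin k × Fin r => A p.1 p.2)

lemma matE_smul {k r : ℕ} (t : ℝ) (A : Matrix (Fin k) (Fin r) ℝ) :
    matE (t • A) = t • matE A := rfl

lemma matE_inj {k r : ℕ} {A B : Matrix (Fin k) (Fin r) ℝ} (h : matE A = matE B) :
    A = B := by
  ext i j
  exact congrFun (congrArg WithLp.ofLp h) (i, j)

lemma frob_eq_norm {k r : ℕ} (A : Matrix (Fin k) (Fin r) ℝ) : frob A = ‖matE A‖ := by
  rw [frob, EuclideanSpace.norm_eq]
  congr 1
  rw [Fintype.sum_prod_type, Matrix.trace, Finset.sum_comm]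
  simp [Matrix.mul_apply, Matrix.diag, matE, sq, Real.norm_eq_abs, abs_mul_abs_self]

lemma term_le {k r : ℕ} (Y x y : Matrix (Fin k) (Fin r) ℝ) {a b : ℝ}
    (ha : 0 ≤ a) (hb : 0 ≤ b) (hab : a + b = 1) :
    frob (Y - (a • x + b • y)) ≤ a * frob (Y - x) + b * frob (Y - y) := by
  have hY : Y - (a • x + b • y) = a • (Y - x) + b • (Y - y) := by
    rw [smul_sub, smul_sub]
    match_scalars <;> linarith
  rw [hY, frob_eq_norm, frob_eq_norm, frob_eq_norm]
  have hE : matE (a • (Y - x) + b • (Y - y)) = a • matE (Y - x) + b • matE (Y - y) := rfl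
  rw [hE]
  calc ‖a • matE (Y - x) + b • matE (Y - y)‖
      ≤ ‖a • matE (Y - x)‖ + ‖b • matE (Y - y)‖ := norm_add_le _ _
    _ = a * ‖matE (Y - x)‖ + b * ‖matE (Y - y)‖ := by
        rw [norm_smul, norm_smul, Real.norm_eq_abs, Real.norm_eq_abs,
          abs_of_nonneg ha, abs_of_nonneg hb]

/-- If equality holds in the convexity inequality for one term, the point lies on the
line through `x` and `y`. -/
lemma term_eq_line {k r : ℕ} (Y x y : Matrix (Fin k) (Fin r) ℝ) {a b : ℝ}
    (ha : 0 < a) (hb : 0 < b) (hxy : x ≠ y)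
    (heq : frob (Y - (a • x + b • y)) = a * frob (Y - x) + b * frob (Y - y))
    (hab : a + b = 1) :
    ∃ t : ℝ, Y = x + t • (y - x) := by
  have hY : Y - (a • x + b • y) = a • (Y - x) + b • (Y - y) := by
    rw [smul_sub, smul_sub]
    match_scalars <;> linarith
  rw [hY, frob_eq_norm, frob_eq_norm, frob_eq_norm] at heq
  have hE : matE (a • (Y - x) + b • (Y - y)) = a • matE (Y - x) + b • matE (Y - y) := rfl
  rw [hE] at heq
  have hray : SameRay ℝ (a • matE (Y - x)) (b • matE (Y - y)) := by
    rw [sameRay_iff_norm_add, norm_smul, norm_smul, Real.norm_eq_abs, Real.norm_eq_abs,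
      abs_of_pos ha, abs_of_pos hb]
    exact heq
  rcases hray with h0 | h0 | ⟨p, q, hp, hq, hpq⟩
  · -- a • matE (Y - x) = 0, so Y = x
    have hm0 : matE (Y - x) = 0 := (smul_eq_zero.mp h0).resolve_left ha.ne'
    have h2 : Y - x = 0 := matE_inj (show matE (Y - x) = matE 0 from hm0)
    exact ⟨0, by rw [zero_smul, add_zero, ← sub_eq_zero]; exact h2⟩
  · -- b • matE (Y - y) = 0, so Y = y
    have hm0 : matE (Y - y) = 0 := (smul_eq_zero.mp h0).resolve_left hb.ne'
    have h2 : Y - y = 0 := matE_inj (show matE (Y - y) = matE 0 from hm0)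
    refine ⟨1, ?_⟩
    have hYy : Y = y := sub_eq_zero.mp h2
    rw [hYy, one_smul]; abel
  · -- p • (a • matE (Y-x)) = q • (b • matE (Y-y)) with p,q > 0
    set c := p * a with hc
    set d := q * b with hd
    have hcpos : 0 < c := mul_pos hp ha
    have hdpos : 0 < d := mul_pos hq hb
    have hmat : c • (Y - x) = d • (Y - y) := by
      apply matE_inj
      rw [matE_smul, matE_smul]
      rw [smul_smul, smul_smul] at hpq
      exact hpq
    rw [smul_sub, smul_sub] at hmat
    by_cases hcd : c = d
    · exfalso
      apply hxy
      rw [← hcd] at hmat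
      have hxy' : c • x = c • y := sub_right_injective hmat
      exact smul_right_injective _ hcpos.ne' hxy'
    · refine ⟨d / (d - c), ?_⟩
      have hdc : d - c ≠ 0 := sub_ne_zero.mpr (Ne.symm hcd)
      have hcd' : c - d ≠ 0 := sub_ne_zero.mpr hcd
      apply smul_right_injective (Matrix (Fin k) (Fin r) ℝ) hcd'
      show (c - d) • Y = (c - d) • (x + (d / (d - c)) • (y - x))
      have h3 : c • Y - d • Y = c • x - d • y := by
        have key : (c • Y - d • Y) - (c • x - d • y)
            = (c • Y - c • x) - (d • Y - d • y) := by abel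
        have := sub_eq_zero.mpr hmat
        rw [this] at key
        exact sub_eq_zero.mp key
      rw [sub_smul, h3]
      match_scalars <;> field_simp <;> ring

/-- The objective A ↦ Σᵢ ‖Xᵢ − A‖_F on ℝ^{k×r} is convex, and it is
strictly convex (hence has a unique minimizer) provided the points X₁,…,X_n do not
all lie on a single line. -/
theorem frobenius_median_objective_convex (k r n : ℕ)
    (X : Fin n → Matrix (Fin k) (Fin r) ℝ) :
    ConvexOn ℝ Set.univ (fun A : Matrix (Fin k) (Fin r) ℝ => ∑ i, frob (X i - A)) ∧
      ((¬ ∃ (a b : Matrix (Fin k) (Fin r) ℝ), ∀ i : Fin n, ∃ t : ℝ, X i = a + t • b) →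
        StrictConvexOn ℝ Set.univ
          (fun A : Matrix (Fin k) (Fin r) ℝ => ∑ i, frob (X i - A))) := by
  have key : ∀ (x y : Matrix (Fin k) (Fin r) ℝ) {a b : ℝ}, 0 ≤ a → 0 ≤ b → a + b = 1 →
      a * ∑ i, frob (X i - x) + b * ∑ i, frob (X i - y)
        = ∑ i, (a * frob (X i - x) + b * frob (X i - y)) := by
    intro x y a b _ _ _
    rw [Finset.sum_add_distrib, Finset.mul_sum, Finset.mul_sum]
  constructor
  · refine ⟨convex_univ, fun x _ y _ a b ha hb hab => ?_⟩
    simp only [smul_eq_mul]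
    rw [key x y ha hb hab]
    exact Finset.sum_le_sum fun i _ => term_le (X i) x y ha hb hab
  · intro h
    refine ⟨convex_univ, fun x _ y _ hxy a b ha hb hab => ?_⟩
    simp only [smul_eq_mul]
    rw [key x y ha.le hb.le hab]
    by_cases hall : ∀ i, frob (X i - (a • x + b • y))
        = a * frob (X i - x) + b * frob (X i - y)
    · exact absurd ⟨x, y - x, fun i => term_eq_line (X i) x y ha hb hxy (hall i) hab⟩ h
    · push_neg at hall
      obtain ⟨i, hi⟩ := hall
      exact Finset.sum_lt_sum (fun j _ => term_le (X j) x y ha.le hb.le hab)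
        ⟨i, Finset.mem_univ i, lt_of_le_of_ne (term_le (X i) x y ha.le hb.le hab) hi⟩
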